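/- (Forward scattering bound with half-derivative gain.) Let s ∈ ℝ and, for each λ ∈ ℤ^D \ {0}, let (φ_λ, ψ_λ) be a λ-mode wave solution on (0,∞); assume M := ∑_{λ∈ℤ^D\{0}} (⟨λ⟩^{2s+2}·φ_λ(1)² + ⟨λ⟩^{2s}·ψ_λ(1)²) < ∞. Then for every λ the limits ψ_{∞,λ} := lim_{t→0⁺} ψ_λ(t) and φ̃_{∞,λ} := lim_{t→0⁺} (φ_λ(t) − ψ_λ(t)·log(t/t_{λ*})) exist, and ∑_{λ∈ℤ^D\{0}} ⟨λ⟩^{2s+1}·(ψ_{∞,λ}² + φ̃_{∞,λ}²) ≤ C·M, where C > 0 depends only on D and p_1,…,p_D (in particular not on s). -/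

import Mathlib

open Real Filter MeasureTheory Topology

/-- τ_λ(t) = (∑ᵢ t^(2-2pᵢ) λᵢ²)^(1/2). -/
noncomputable def tau {D : ℕ} (p : Fin D → ℝ) (lam : Fin D → ℤ) (t : ℝ) : ℝ :=
  Real.sqrt (∑ i, t ^ (2 - 2 * p i) * ((lam i : ℝ)) ^ 2)

/-- The Japanese bracket ⟨λ⟩ = (1 + |λ|²)^(1/2) of a frequency λ ∈ ℤ^D. -/
noncomputable def jap {D : ℕ} (lam : Fin D → ℤ) : ℝ :=
  Real.sqrt (1 + ∑ i, ((lam i : ℝ)) ^ 2)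

/-- A λ-mode wave solution on the set `I`: t φ' = ψ and t ψ' = -τ_λ(t)² φ. -/
def IsWaveSol {D : ℕ} (p : Fin D → ℝ) (lam : Fin D → ℤ) (φ ψ : ℝ → ℝ) (I : Set ℝ) : Prop :=
  ∀ t ∈ I, HasDerivAt φ (ψ t / t) t ∧ HasDerivAt ψ (-(tau p lam t ^ 2) * φ t / t) t

namespace WS
variable {D : ℕ}

noncomputable def Tf (p : Fin D → ℝ) (lam : Fin D → ℤ) (t : ℝ) : ℝ :=
  ∑ i, t ^ (2 - 2 * p i) * ((lam i : ℝ)) ^ 2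
noncomputable def Sf (p : Fin D → ℝ) (lam : Fin D → ℤ) (t : ℝ) : ℝ :=
  ∑ i, (2 - 2 * p i) * t ^ (2 - 2 * p i) * ((lam i : ℝ)) ^ 2
noncomputable def S2f (p : Fin D → ℝ) (lam : Fin D → ℤ) (t : ℝ) : ℝ :=
  ∑ i, (2 - 2 * p i) ^ 2 * t ^ (2 - 2 * p i) * ((lam i : ℝ)) ^ 2
noncomputable def zf (p : Fin D → ℝ) (lam : Fin D → ℤ) (t : ℝ) : ℝ :=
  2 * Tf p lam t / Sf p lam t
noncomputable def zder (p : Fin D → ℝ) (lam : Fin D → ℤ) (t : ℝ) : ℝ :=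
  2 * (Sf p lam t ^ 2 - Tf p lam t * S2f p lam t) / (t * Sf p lam t ^ 2)

lemma Tf_nonneg (p : Fin D → ℝ) (lam : Fin D → ℤ) {t : ℝ} (ht : 0 < t) :
    0 ≤ Tf p lam t :=
  Finset.sum_nonneg fun i _ => mul_nonneg (Real.rpow_nonneg ht.le _) (sq_nonneg _)

lemma tau_sq (p : Fin D → ℝ) (lam : Fin D → ℤ) {t : ℝ} (ht : 0 < t) :
    tau p lam t ^ 2 = Tf p lam t := Real.sq_sqrt (Tf_nonneg p lam ht)

lemma Tf_pos (p : Fin D → ℝ) {lam : Fin D → ℤ} (hlam : lam ≠ 0) {t : ℝ} (ht : 0 < t) :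
    0 < Tf p lam t := by
  obtain ⟨i, hi⟩ := Function.ne_iff.1 hlam
  refine Finset.sum_pos' (fun j _ => mul_nonneg (Real.rpow_nonneg ht.le _) (sq_nonneg _))
    ⟨i, Finset.mem_univ i, ?_⟩
  have : ((lam i : ℝ)) ≠ 0 := Int.cast_ne_zero.2 hi
  positivity

lemma tau_pos (p : Fin D → ℝ) {lam : Fin D → ℤ} (hlam : lam ≠ 0) {t : ℝ} (ht : 0 < t) :
    0 < tau p lam t := Real.sqrt_pos.2 (Tf_pos p hlam ht)

variable {p : Fin D → ℝ} {a b : ℝ}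

lemma Sf_lb (hab : ∀ i, a ≤ 2 - 2 * p i ∧ 2 - 2 * p i ≤ b) (lam : Fin D → ℤ) {t : ℝ}
    (ht : 0 < t) : a * Tf p lam t ≤ Sf p lam t := by
  rw [Tf, Finset.mul_sum]
  refine Finset.sum_le_sum fun i _ => ?_
  rw [← mul_assoc]
  exact mul_le_mul_of_nonneg_right
    (mul_le_mul_of_nonneg_right (hab i).1 (Real.rpow_nonneg ht.le _)) (sq_nonneg _)

lemma Sf_ub (hab : ∀ i, a ≤ 2 - 2 * p i ∧ 2 - 2 * p i ≤ b) (lam : Fin D → ℤ) {t : ℝ}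
    (ht : 0 < t) : Sf p lam t ≤ b * Tf p lam t := by
  rw [Tf, Finset.mul_sum]
  refine Finset.sum_le_sum fun i _ => ?_
  rw [← mul_assoc]
  exact mul_le_mul_of_nonneg_right
    (mul_le_mul_of_nonneg_right (hab i).2 (Real.rpow_nonneg ht.le _)) (sq_nonneg _)

lemma Sf_pos (ha : 0 < a) (hab : ∀ i, a ≤ 2 - 2 * p i ∧ 2 - 2 * p i ≤ b)
    {lam : Fin D → ℤ} (hlam : lam ≠ 0) {t : ℝ} (ht : 0 < t) : 0 < Sf p lam t :=
  lt_of_lt_of_le (mul_pos ha (Tf_pos p hlam ht)) (Sf_lb hab lam ht)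

lemma CS (lam : Fin D → ℤ) {t : ℝ} (ht : 0 < t) :
    Sf p lam t ^ 2 ≤ Tf p lam t * S2f p lam t := by
  have h := Finset.sum_mul_sq_le_sq_mul_sq Finset.univ
    (fun i => Real.sqrt (t ^ (2 - 2*p i) * ((lam i : ℝ))^2))
    (fun i => (2 - 2*p i) * Real.sqrt (t ^ (2 - 2*p i) * ((lam i : ℝ))^2))
  have e1 : ∀ i : Fin D, Real.sqrt (t ^ (2 - 2*p i) * ((lam i : ℝ))^2) *
      ((2 - 2*p i) * Real.sqrt (t ^ (2 - 2*p i) * ((lam i : ℝ))^2)) =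
      (2 - 2*p i) * t ^ (2 - 2*p i) * ((lam i : ℝ))^2 := by
    intro i
    have hx : (0:ℝ) ≤ t ^ (2 - 2*p i) * ((lam i : ℝ))^2 :=
      mul_nonneg (Real.rpow_nonneg ht.le _) (sq_nonneg _)
    rw [mul_comm, mul_assoc, Real.mul_self_sqrt hx]; ring
  have e2 : ∀ i : Fin D, Real.sqrt (t ^ (2 - 2*p i) * ((lam i : ℝ))^2) ^ 2 =
      t ^ (2 - 2*p i) * ((lam i : ℝ))^2 := fun i =>
    Real.sq_sqrt (mul_nonneg (Real.rpow_nonneg ht.le _) (sq_nonneg _))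
  have e3 : ∀ i : Fin D, ((2 - 2*p i) * Real.sqrt (t ^ (2 - 2*p i) * ((lam i : ℝ))^2)) ^ 2 =
      (2 - 2*p i)^2 * t ^ (2 - 2*p i) * ((lam i : ℝ))^2 := by
    intro i
    rw [mul_pow, Real.sq_sqrt (mul_nonneg (Real.rpow_nonneg ht.le _) (sq_nonneg _))]; ring
  simp only [e1, e2, e3] at h
  simpa [Sf, Tf, S2f] using h

lemma Tf_high (lam : Fin D → ℤ) (ha : ∀ i, a ≤ 2 - 2*p i) {ts t : ℝ} (hts : 0 < ts) (h1 : ts ≤ t)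
    (hTs : Tf p lam ts = 1) : (t/ts) ^ a ≤ Tf p lam t := by
  have ht : 0 < t := hts.trans_le h1
  have hq1 : (1:ℝ) ≤ t/ts := (one_le_div hts).2 h1
  have hq0 : (0:ℝ) ≤ t/ts := by positivity
  have key : ∀ i : Fin D, (t/ts)^a * (ts ^ (2-2*p i) * ((lam i:ℝ))^2)
      ≤ t ^ (2-2*p i) * ((lam i:ℝ))^2 := by
    intro i
    have e : t ^ (2-2*p i) = ts ^ (2-2*p i) * (t/ts) ^ (2-2*p i) := by
      rw [← Real.mul_rpow hts.le hq0, mul_div_cancel₀ _ hts.ne']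
    rw [e]
    have h2 : (t/ts)^a ≤ (t/ts)^(2-2*p i) :=
      Real.rpow_le_rpow_of_exponent_le hq1 (ha i)
    have h3 : (0:ℝ) ≤ ts ^ (2-2*p i) * ((lam i:ℝ))^2 :=
      mul_nonneg (Real.rpow_nonneg hts.le _) (sq_nonneg _)
    calc (t/ts)^a * (ts ^ (2-2*p i) * ((lam i:ℝ))^2)
        ≤ (t/ts)^(2-2*p i) * (ts ^ (2-2*p i) * ((lam i:ℝ))^2) :=
          mul_le_mul_of_nonneg_right h2 h3
      _ = ts ^ (2-2*p i) * (t/ts) ^ (2-2*p i) * ((lam i:ℝ))^2 := by ring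
  calc (t/ts)^a = (t/ts)^a * Tf p lam ts := by rw [hTs, mul_one]
    _ = ∑ i, (t/ts)^a * (ts ^ (2-2*p i) * ((lam i:ℝ))^2) := by
        rw [Tf, Finset.mul_sum]
    _ ≤ ∑ i, t ^ (2-2*p i) * ((lam i:ℝ))^2 := Finset.sum_le_sum fun i _ => key i
    _ = Tf p lam t := rfl

lemma Tf_low (lam : Fin D → ℤ) (ha : ∀ i, a ≤ 2 - 2*p i) {ts t : ℝ} (ht : 0 < t) (h1 : t ≤ ts)
    (hTs : Tf p lam ts = 1) : Tf p lam t ≤ (t/ts) ^ a := by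
  have hts : 0 < ts := ht.trans_le h1
  have hq1 : t/ts ≤ 1 := (div_le_one hts).2 h1
  have hq0 : (0:ℝ) < t/ts := by positivity
  have key : ∀ i : Fin D, t ^ (2-2*p i) * ((lam i:ℝ))^2
      ≤ (t/ts)^a * (ts ^ (2-2*p i) * ((lam i:ℝ))^2) := by
    intro i
    have e : t ^ (2-2*p i) = ts ^ (2-2*p i) * (t/ts) ^ (2-2*p i) := by
      rw [← Real.mul_rpow hts.le hq0.le, mul_div_cancel₀ _ hts.ne']
    rw [e]
    have h2 : (t/ts)^(2-2*p i) ≤ (t/ts)^a :=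
      Real.rpow_le_rpow_of_exponent_ge hq0 hq1 (ha i)
    have h3 : (0:ℝ) ≤ ts ^ (2-2*p i) * ((lam i:ℝ))^2 :=
      mul_nonneg (Real.rpow_nonneg hts.le _) (sq_nonneg _)
    calc ts ^ (2-2*p i) * (t/ts) ^ (2-2*p i) * ((lam i:ℝ))^2
        = (t/ts)^(2-2*p i) * (ts ^ (2-2*p i) * ((lam i:ℝ))^2) := by ring
      _ ≤ (t/ts)^a * (ts ^ (2-2*p i) * ((lam i:ℝ))^2) := mul_le_mul_of_nonneg_right h2 h3
  calc Tf p lam t ≤ ∑ i, (t/ts)^a * (ts ^ (2-2*p i) * ((lam i:ℝ))^2) :=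
        Finset.sum_le_sum fun i _ => key i
    _ = (t/ts)^a * Tf p lam ts := by rw [Tf, Finset.mul_sum]
    _ = (t/ts)^a := by rw [hTs, mul_one]

-- algebra: lower bound for Eh
lemma alg_Eh_lb {m z r ψ φ : ℝ} (hm : 0 < m) (hz : m ≤ z) (hr : 1 ≤ r) :
    m^2/2 * (ψ^2/r + r*φ^2) ≤ z^2*ψ^2/r + z*ψ*φ/r + φ^2/(2*r) + z^2*r*φ^2 := by
  have hr0 : (0:ℝ) < r := lt_of_lt_of_le one_pos hr
  have hri0 : (0:ℝ) < r⁻¹ := inv_pos.2 hr0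
  have hri1 : r⁻¹ ≤ 1 := inv_le_one_of_one_le₀ hr
  have hrr : r * r⁻¹ = 1 := mul_inv_cancel₀ hr0.ne'
  have hz0 : 0 < z := hm.trans_le hz
  have e0 : z^2*ψ^2/r = z^2*(ψ^2 * r⁻¹) := by rw [div_eq_mul_inv]; ring
  have e1 : ψ^2/r = ψ^2 * r⁻¹ := div_eq_mul_inv _ _
  have e2 : z*ψ*φ/r = z*ψ*φ * r⁻¹ := div_eq_mul_inv _ _
  have e3 : φ^2/(2*r) = φ^2 * r⁻¹ / 2 := by rw [div_eq_mul_inv, mul_inv]; ring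
  rw [e0, e1, e2, e3]
  nlinarith [mul_nonneg (sq_nonneg (z*ψ+φ)) hri0.le, mul_nonneg (sq_nonneg ψ) hri0.le,
    mul_nonneg (mul_nonneg hm.le hm.le) (mul_nonneg (sq_nonneg φ) hr0.le),
    mul_le_mul_of_nonneg_right (mul_le_mul hz hz hm.le hz0.le) (mul_nonneg (sq_nonneg φ) hr0.le),
    mul_le_mul_of_nonneg_right (mul_le_mul hz hz hm.le hz0.le) (mul_nonneg (sq_nonneg ψ) hri0.le)]

-- algebra: upper bound for B
lemma alg_B_ub {m M z r ψ φ : ℝ} (hm : 0 < m) (hz : m ≤ z) (hzM : z ≤ M) (hr : 1 ≤ r) :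
    2*z*ψ^2/r + ψ*φ/r + 2*z*r*φ^2 ≤ (2*M + 1) * (ψ^2/r + r*φ^2) := by
  have hr0 : (0:ℝ) < r := lt_of_lt_of_le one_pos hr
  have hri0 : (0:ℝ) < r⁻¹ := inv_pos.2 hr0
  have hrir : r⁻¹ ≤ r := le_trans (inv_le_one_of_one_le₀ hr) hr
  have e1 : ψ^2/r = ψ^2 * r⁻¹ := div_eq_mul_inv _ _
  have e2 : ψ*φ/r = ψ*φ * r⁻¹ := div_eq_mul_inv _ _
  have e3 : 2*z*ψ^2/r = 2*z*(ψ^2 * r⁻¹) := by rw [div_eq_mul_inv]; ring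
  rw [e1, e2, e3]
  have hM0 : 0 < M := lt_of_lt_of_le (hm.trans_le hz) hzM
  nlinarith [mul_nonneg (sq_nonneg (ψ+φ)) hri0.le, mul_nonneg (sq_nonneg (ψ-φ)) hri0.le,
    mul_le_mul_of_nonneg_right hzM (mul_nonneg (sq_nonneg ψ) hri0.le),
    mul_le_mul_of_nonneg_right hzM (mul_nonneg (sq_nonneg φ) hr0.le),
    mul_le_mul_of_nonneg_left hrir (sq_nonneg φ)]

-- algebra: upper bound for Eh at t=1
lemma alg_Eh_ub {m M z r ψ φ : ℝ} (hm : 0 < m) (hz : m ≤ z) (hzM : z ≤ M) (hr : 1 ≤ r) :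
    z^2*ψ^2/r + z*ψ*φ/r + φ^2/(2*r) + z^2*r*φ^2 ≤ (M^2 + M + 1) * (ψ^2/r + r*φ^2) := by
  have hr0 : (0:ℝ) < r := lt_of_lt_of_le one_pos hr
  have hri0 : (0:ℝ) < r⁻¹ := inv_pos.2 hr0
  have hrir : r⁻¹ ≤ r := le_trans (inv_le_one_of_one_le₀ hr) hr
  have hM0 : 0 < M := lt_of_lt_of_le (hm.trans_le hz) hzM
  have e0 : z^2*ψ^2/r = z^2*(ψ^2 * r⁻¹) := by rw [div_eq_mul_inv]; ring
  have e1 : ψ^2/r = ψ^2 * r⁻¹ := div_eq_mul_inv _ _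
  have e2 : z*ψ*φ/r = z*(ψ*φ) * r⁻¹ := by rw [div_eq_mul_inv]; ring
  have e3 : φ^2/(2*r) = φ^2 * r⁻¹ / 2 := by rw [div_eq_mul_inv, mul_inv]; ring
  rw [e0, e1, e2, e3]
  nlinarith [mul_nonneg (sq_nonneg (ψ+φ)) (mul_nonneg hM0.le hri0.le),
    mul_nonneg (sq_nonneg (ψ-φ)) (mul_nonneg hM0.le hri0.le),
    mul_le_mul_of_nonneg_right (mul_le_mul hzM hzM (hm.trans_le hz).le hM0.le) (mul_nonneg (sq_nonneg ψ) hri0.le),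
    mul_le_mul_of_nonneg_right (mul_le_mul hzM hzM (hm.trans_le hz).le hM0.le) (mul_nonneg (sq_nonneg φ) hr0.le),
    mul_le_mul_of_nonneg_left hrir (sq_nonneg φ),
    mul_nonneg (sq_nonneg ψ) hri0.le, mul_nonneg (sq_nonneg φ) hr0.le]

-- algebra low region quadratic
lemma alg_low {x ψ ph : ℝ} (hx : 0 ≤ x) :
    -((1+x)^2 * (ψ^2 + ph^2)) ≤ (ph * (-x) - ψ) * (ph + ψ * (-x)) := by
  nlinarith [sq_nonneg (ph+ψ), sq_nonneg (ph-ψ), mul_nonneg (mul_nonneg hx hx) (sq_nonneg (ph+ψ)),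
    mul_nonneg hx (sq_nonneg (ph+ψ)), mul_nonneg hx (sq_nonneg (ph-ψ)),
    mul_nonneg (mul_nonneg hx hx) (sq_nonneg (ph-ψ))]

-- exp bound : (1+x)^2 ≤ C_β e^{βx}
lemma alg_exp {x β : ℝ} (hx : 0 ≤ x) (hβ : 0 < β) :
    (1+x)^2 ≤ (1 + 2/β + 4/β^2) * Real.exp (β * x) := by
  have h1 : (1 + β*x/2)^2 ≤ Real.exp (β*x) := by
    have h2 : 1 + β*x/2 ≤ Real.exp (β*x/2) := by
      have := Real.add_one_le_exp (β*x/2); linarith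
    have h3 : (0:ℝ) ≤ 1 + β*x/2 := by positivity
    calc (1 + β*x/2)^2 ≤ Real.exp (β*x/2)^2 := by
          exact pow_le_pow_left₀ h3 h2 2
      _ = Real.exp (β*x) := by rw [← Real.exp_nat_mul]; ring_nf
  have hC : (0:ℝ) < 1 + 2/β + 4/β^2 := by positivity
  calc (1+x)^2 ≤ (1 + 2/β + 4/β^2) * (1 + β*x/2)^2 := by
        have hβ2 : (0:ℝ) < β^2 := by positivity
        rw [show ((1:ℝ) + 2/β + 4/β^2) * (1 + β*x/2)^2 = ((β^2 + 2*β + 4) * (1+β*x/2)^2) / β^2 from by field_simp, le_div_iff₀ hβ2]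
        nlinarith [mul_nonneg (mul_nonneg hβ.le hβ.le) (mul_nonneg hx hx),
          mul_nonneg hβ.le hx, mul_nonneg (mul_nonneg hβ.le hx) (mul_nonneg hβ.le hx),
          mul_nonneg (mul_nonneg (mul_nonneg hβ.le hβ.le) hβ.le) hx,
          mul_nonneg (mul_nonneg (mul_nonneg hβ.le hβ.le) (mul_nonneg hβ.le hβ.le)) (mul_nonneg hx hx)]
    _ ≤ (1 + 2/β + 4/β^2) * Real.exp (β*x) := by
        exact mul_le_mul_of_nonneg_left h1 hC.le


lemma zder_nonpos (lam : Fin D → ℤ) {t : ℝ} (ht : 0 < t) : zder p lam t ≤ 0 := by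
  apply div_nonpos_of_nonpos_of_nonneg
  · nlinarith [CS (p := p) lam ht]
  · positivity

lemma zf_bounds (ha : 0 < a) (hab : ∀ i, a ≤ 2 - 2 * p i ∧ 2 - 2 * p i ≤ b)
    {lam : Fin D → ℤ} (hlam : lam ≠ 0) {t : ℝ} (ht : 0 < t) :
    2 / b ≤ zf p lam t ∧ zf p lam t ≤ 2 / a := by
  have hT := Tf_pos p hlam ht
  have hS := Sf_pos ha hab hlam ht
  have h1 := Sf_lb hab lam ht
  have h2 := Sf_ub hab lam ht
  have hb : 0 < b := by nlinarith
  constructor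
  · rw [zf, div_le_div_iff₀ hb hS]; nlinarith
  · rw [zf, div_le_div_iff₀ hS ha]; nlinarith

lemma hasDerivAt_Tf (p : Fin D → ℝ) (lam : Fin D → ℤ) {t : ℝ} (ht : 0 < t) :
    HasDerivAt (Tf p lam) (Sf p lam t / t) t := by
  have h : HasDerivAt (fun t : ℝ => ∑ i, t ^ (2 - 2*p i) * ((lam i:ℝ))^2)
      (∑ i, ((2 - 2*p i) * t ^ (2 - 2*p i) * ((lam i:ℝ))^2) / t) t := by
    refine HasDerivAt.fun_sum fun i _ => ?_
    have h := (Real.hasDerivAt_rpow_const (p := 2 - 2*p i) (Or.inl ht.ne')).mul_const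
      (((lam i : ℝ))^2)
    refine h.congr_deriv ?_
    rw [Real.rpow_sub_one ht.ne']; ring
  rw [← Finset.sum_div] at h
  exact h

lemma hasDerivAt_Sf (p : Fin D → ℝ) (lam : Fin D → ℤ) {t : ℝ} (ht : 0 < t) :
    HasDerivAt (Sf p lam) (S2f p lam t / t) t := by
  have h : HasDerivAt (fun t : ℝ => ∑ i, (2 - 2*p i) * t ^ (2 - 2*p i) * ((lam i:ℝ))^2)
      (∑ i, ((2 - 2*p i)^2 * t ^ (2 - 2*p i) * ((lam i:ℝ))^2) / t) t := by
    refine HasDerivAt.fun_sum fun i _ => ?_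
    have h := ((Real.hasDerivAt_rpow_const (p := 2 - 2*p i)
      (Or.inl ht.ne')).const_mul (2 - 2*p i)).mul_const (((lam i : ℝ))^2)
    refine h.congr_deriv ?_
    rw [Real.rpow_sub_one ht.ne']; ring
  rw [← Finset.sum_div] at h
  exact h

lemma hasDerivAt_tau (p : Fin D → ℝ) (lam : Fin D → ℤ) {t : ℝ} (ht : 0 < t)
    (hT : 0 < Tf p lam t) :
    HasDerivAt (tau p lam) (Sf p lam t / t / (2 * tau p lam t)) t :=
  (hasDerivAt_Tf p lam ht).sqrt hT.ne'

lemma hasDerivAt_zf (p : Fin D → ℝ) (lam : Fin D → ℤ) {t : ℝ} (ht : 0 < t)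
    (hS : 0 < Sf p lam t) : HasDerivAt (zf p lam) (zder p lam t) t := by
  have h := ((hasDerivAt_Tf p lam ht).const_mul 2).div (hasDerivAt_Sf p lam ht) hS.ne'
  refine h.congr_deriv ?_
  rw [zder]
  field_simp

/-- high frequency energy -/
noncomputable def Eh (p : Fin D → ℝ) (lam : Fin D → ℤ) (φ ψ : ℝ → ℝ) (t : ℝ) : ℝ :=
  zf p lam t ^ 2 * ψ t ^ 2 / tau p lam t + zf p lam t * ψ t * φ t / tau p lam t +
    φ t ^ 2 / (2 * tau p lam t) + zf p lam t ^ 2 * tau p lam t * φ t ^ 2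

noncomputable def Bq (p : Fin D → ℝ) (lam : Fin D → ℤ) (φ ψ : ℝ → ℝ) (t : ℝ) : ℝ :=
  2 * zf p lam t * ψ t ^ 2 / tau p lam t + ψ t * φ t / tau p lam t +
    2 * zf p lam t * tau p lam t * φ t ^ 2

lemma hasDerivAt_Eh (p : Fin D → ℝ) (lam : Fin D → ℤ) {t : ℝ} (ht : 0 < t)
    (hT : 0 < Tf p lam t) (hS : 0 < Sf p lam t)
    {φ ψ : ℝ → ℝ} (hφ : HasDerivAt φ (ψ t / t) t)
    (hψ : HasDerivAt ψ (-(tau p lam t ^ 2) * φ t / t) t) :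
    HasDerivAt (Eh p lam φ ψ)
      (zder p lam t * Bq p lam φ ψ t
        - φ t ^ 2 * Sf p lam t / (4 * tau p lam t ^ 3 * t)) t := by
  have hr : 0 < tau p lam t := Real.sqrt_pos.2 hT
  have hz := hasDerivAt_zf p lam ht hS
  have hr' := hasDerivAt_tau p lam ht hT
  have hrne := hr.ne'
  have hSne := hS.ne'
  have htne := ht.ne'
  have H := ((((((hz.pow 2).mul (hψ.pow 2)).div hr' hr.ne').add
      (((hz.mul hψ).mul hφ).div hr' hr.ne')).add
      ((hφ.pow 2).div (hr'.const_mul 2) (by positivity))).add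
      (((hz.pow 2).mul hr').mul (hφ.pow 2)))
  refine H.congr_deriv ?_
  have hTr : Tf p lam t = tau p lam t ^ 2 := (tau_sq p lam ht).symm
  simp only [zder, Bq, zf, hTr, Pi.pow_apply, Pi.mul_apply, Nat.reduceSub, pow_one]
  field_simp
  ring


noncomputable def Chigh (a b : ℝ) : ℝ :=
  2/(2/b)^2 * Real.exp (((4*(2/a)+2)/(2/b)^2) * (2/a - 2/b) + (b/(2*(2/b)^2))/a)
    * ((2/a)^2 + (2/a) + 1)

set_option maxHeartbeats 2000000 in
lemma high_estimate (ha : 0 < a) (hb : a ≤ b)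
    (hab : ∀ i, a ≤ 2 - 2 * p i ∧ 2 - 2 * p i ≤ b)
    {lam : Fin D → ℤ} (hlam : lam ≠ 0) {ts : ℝ} (hts0 : 0 < ts) (hts1 : ts ≤ 1)
    (hTs : Tf p lam ts = 1) {φ ψ : ℝ → ℝ}
    (hsol : IsWaveSol p lam φ ψ (Set.Ioi 0)) :
    ψ ts ^ 2 + φ ts ^ 2 ≤
      Chigh a b * (ψ 1 ^ 2 / tau p lam 1 + tau p lam 1 * φ 1 ^ 2) := by
  have hb0 : 0 < b := ha.trans_le hb
  set m : ℝ := 2/b with hm_def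
  set M : ℝ := 2/a with hM_def
  have hm0 : 0 < m := by positivity
  have hM0 : 0 < M := by positivity
  have hmM : m ≤ M := by rw [hm_def, hM_def, div_le_div_iff₀ hb0 ha]; nlinarith
  set K : ℝ := (4*M+2)/m^2 with hK_def
  set c1 : ℝ := b/(2*m^2) with hc1_def
  have hK0 : 0 < K := by positivity
  have hc10 : 0 < c1 := by positivity
  -- pointwise facts
  have hfacts : ∀ t ∈ Set.Icc ts 1, 0 < t ∧ 1 ≤ tau p lam t ∧
      m ≤ zf p lam t ∧ zf p lam t ≤ M ∧ 1 ≤ ts^a * t^(-a) * tau p lam t^2 := by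
    intro t htmem
    have ht : 0 < t := hts0.trans_le htmem.1
    have hq1 : (1:ℝ) ≤ t/ts := (one_le_div hts0).2 htmem.1
    have hTlb : (t/ts)^a ≤ Tf p lam t := Tf_high lam (fun i => (hab i).1) hts0 htmem.1 hTs
    have h1T : (1:ℝ) ≤ Tf p lam t := by
      refine le_trans ?_ hTlb
      calc (1:ℝ) = (t/ts)^(0:ℝ) := (Real.rpow_zero _).symm
        _ ≤ (t/ts)^a := Real.rpow_le_rpow_of_exponent_le hq1 ha.le
    have htau1 : 1 ≤ tau p lam t := by
      have := Real.sqrt_le_sqrt h1T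
      rwa [Real.sqrt_one] at this
    have hzb := zf_bounds ha hab hlam ht
    refine ⟨ht, htau1, hzb.1, hzb.2, ?_⟩
    have he1 : t^(-a) * t^a = 1 := by
      rw [← Real.rpow_add ht, neg_add_cancel, Real.rpow_zero]
    have he2 : (ts:ℝ)^a ≠ 0 := (Real.rpow_pos_of_pos hts0 a).ne'
    have hdiv : (t/ts)^a = t^a / ts^a := Real.div_rpow ht.le hts0.le a
    have hq : ts^a * t^(-a) * (t^a/ts^a) = 1 := by
      rw [mul_comm (ts^a) (t^(-a))]
      rw [show t^(-a) * ts^a * (t^a/ts^a) = (t^(-a)*t^a) * (ts^a/ts^a) by ring,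
        he1, div_self he2, mul_one]
    have hQpos : 0 < ts^a * t^(-a) :=
      mul_pos (Real.rpow_pos_of_pos hts0 a) (Real.rpow_pos_of_pos ht (-a))
    calc (1:ℝ) = ts^a * t^(-a) * (t^a/ts^a) := hq.symm
      _ ≤ ts^a * t^(-a) * Tf p lam t := by
          refine mul_le_mul_of_nonneg_left (le_trans (le_of_eq hdiv.symm) hTlb) hQpos.le
      _ = ts^a * t^(-a) * tau p lam t^2 := by rw [tau_sq p lam ht]
  -- the weight function and its monotonicity
  set g : ℝ → ℝ := fun t => -(K * zf p lam t) - (c1/a)*ts^a*t^(-a) with hg_def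
  set W : ℝ → ℝ := fun t => Eh p lam φ ψ t * Real.exp (g t) with hW_def
  set Wd : ℝ → ℝ := fun t =>
    ((zder p lam t * Bq p lam φ ψ t - φ t^2 * Sf p lam t/(4*tau p lam t^3*t))
      + Eh p lam φ ψ t * (-(K*zder p lam t) - (c1/a)*ts^a*(-a*t^(-a-1))))
      * Real.exp (g t) with hWd_def
  have hWder : ∀ t ∈ Set.Ioi (0:ℝ), HasDerivAt W (Wd t) t := by
    intro t ht'
    have ht : 0 < t := ht'
    have hT := Tf_pos p hlam ht
    have hS := Sf_pos ha hab hlam ht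
    have hg' : HasDerivAt g (-(K*zder p lam t) - (c1/a)*ts^a*(-a*t^(-a-1))) t := by
      have h1 := ((hasDerivAt_zf p lam ht hS).const_mul K).neg
      have h2 := (Real.hasDerivAt_rpow_const (x := t) (p := -a)
        (Or.inl ht.ne')).const_mul ((c1/a)*ts^a)
      exact h1.sub h2
    have hE := hasDerivAt_Eh p lam ht hT hS (hsol t ht').1 (hsol t ht').2
    have := hE.mul hg'.exp
    refine this.congr_deriv ?_
    rw [hWd_def]
    ring
  have hmono : MonotoneOn W (Set.Icc ts 1) := by
    refine monotoneOn_of_hasDerivWithinAt_nonneg (f' := Wd) (convex_Icc ts 1) ?_ ?_ ?_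
    · intro t htmem
      exact ((hWder t (hfacts t htmem).1).continuousAt).continuousWithinAt
    · intro t htmem
      rw [interior_Icc] at htmem
      have htmem' : t ∈ Set.Icc ts 1 := Set.mem_Icc.2 ⟨htmem.1.le, htmem.2.le⟩
      exact ((hWder t (hfacts t htmem').1).hasDerivWithinAt)
    · intro t htmem
      rw [interior_Icc] at htmem
      have htmem' : t ∈ Set.Icc ts 1 := Set.mem_Icc.2 ⟨htmem.1.le, htmem.2.le⟩
      obtain ⟨ht, htau1, hzm, hzM, hQ⟩ := hfacts t htmem'
      have htau0 : 0 < tau p lam t := lt_of_lt_of_le one_pos htau1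
      have hS := Sf_pos ha hab hlam ht
      have hT := Tf_pos p hlam ht
      rw [hWd_def]
      refine mul_nonneg ?_ (Real.exp_nonneg _)
      -- core inequality
      have hzder := zder_nonpos (p := p) lam ht
      -- part 1 : Bq ≤ K * Eh
      have hBub : Bq p lam φ ψ t ≤ (2*M+1) * (ψ t^2/tau p lam t + tau p lam t*φ t^2) :=
        alg_B_ub hm0 hzm hzM htau1
      have hElb : m^2/2 * (ψ t^2/tau p lam t + tau p lam t*φ t^2) ≤ Eh p lam φ ψ t :=
        alg_Eh_lb hm0 hzm htau1
      have hBK : Bq p lam φ ψ t ≤ K * Eh p lam φ ψ t := by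
        have he : (2*M+1 : ℝ) = K * (m^2/2) := by
          rw [hK_def]; field_simp; ring
        calc Bq p lam φ ψ t ≤ (2*M+1) * (ψ t^2/tau p lam t + tau p lam t*φ t^2) := hBub
          _ = K * (m^2/2 * (ψ t^2/tau p lam t + tau p lam t*φ t^2)) := by rw [he]; ring
          _ ≤ K * Eh p lam φ ψ t := mul_le_mul_of_nonneg_left hElb hK0.le
      have part1 : 0 ≤ zder p lam t * (Bq p lam φ ψ t - K * Eh p lam φ ψ t) := by
        nlinarith [mul_nonneg (neg_nonneg.2 hzder) (sub_nonneg.2 hBK)]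
      -- part 2
      have hEh0 : 0 ≤ Eh p lam φ ψ t := by
        refine le_trans ?_ hElb
        positivity
      have hY : m^2/2 * (tau p lam t * φ t^2) ≤ Eh p lam φ ψ t := by
        have hX : 0 ≤ ψ t^2/tau p lam t := by positivity
        nlinarith
      have hSb : Sf p lam t ≤ b * tau p lam t^2 := by
        have := Sf_ub hab lam ht
        rwa [← tau_sq p lam ht] at this
      set Q : ℝ := ts^a * t^(-a) with hQ_def
      have hQpos : 0 < Q :=
        mul_pos (Real.rpow_pos_of_pos hts0 a) (Real.rpow_pos_of_pos ht (-a))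
      have part2 : φ t^2 * Sf p lam t/(4*tau p lam t^3*t) ≤ c1*ts^a*(-(-a*t^(-a-1)))/a * Eh p lam φ ψ t := by
        have hta : t^(-a-1) = t^(-a)/t := by
          rw [show (-a-1 : ℝ) = -a - 1 by ring, Real.rpow_sub_one ht.ne']
        rw [hta]
        rw [show c1*ts^a*(-(-a*(t^(-a)/t)))/a * Eh p lam φ ψ t
          = (c1*Q*Eh p lam φ ψ t*a/a)/t by rw [hQ_def]; ring, mul_div_assoc (c1*Q*Eh p lam φ ψ t) a a,
          div_self ha.ne', mul_one]
        rw [div_le_div_iff₀ (by positivity) ht]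
        -- φ² S t ≤ c1 Q Eh (4 τ³ t)
        have hS4 : Sf p lam t ≤ b*Q*tau p lam t^4 := by
          calc Sf p lam t ≤ b * tau p lam t^2 := hSb
            _ = b * tau p lam t^2 * 1 := (mul_one _).symm
            _ ≤ b * tau p lam t^2 * (Q * tau p lam t^2) := by
                refine mul_le_mul_of_nonneg_left hQ (by positivity)
            _ = b*Q*tau p lam t^4 := by ring
        have hint2 : Sf p lam t * (φ t^2 * t) ≤ b*Q*tau p lam t^4 * (φ t^2*t) :=
          mul_le_mul_of_nonneg_right hS4 (by positivity)
        have hint1 : (4*c1*Q*tau p lam t^3*t) * (m^2/2 * (tau p lam t * φ t^2))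
            ≤ (4*c1*Q*tau p lam t^3*t) * Eh p lam φ ψ t :=
          mul_le_mul_of_nonneg_left hY (by positivity)
        have he : (4*c1*Q*tau p lam t^3*t) * (m^2/2 * (tau p lam t * φ t^2))
            = b*Q*tau p lam t^4 * (φ t^2*t) := by
          rw [hc1_def]; field_simp; ring
        rw [he] at hint1
        calc φ t^2 * Sf p lam t * t = Sf p lam t * (φ t^2 * t) := by ring
          _ ≤ b*Q*tau p lam t^4 * (φ t^2*t) := hint2
          _ ≤ (4*c1*Q*tau p lam t^3*t) * Eh p lam φ ψ t := hint1
          _ = c1*Q*Eh p lam φ ψ t * (4*tau p lam t^3*t) := by ring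
      have hexpand : (zder p lam t * Bq p lam φ ψ t - φ t^2 * Sf p lam t/(4*tau p lam t^3*t))
            + Eh p lam φ ψ t * (-(K*zder p lam t) - (c1/a)*ts^a*(-a*t^(-a-1)))
          = zder p lam t * (Bq p lam φ ψ t - K * Eh p lam φ ψ t)
            + (c1*ts^a*(-(-a*t^(-a-1)))/a * Eh p lam φ ψ t
              - φ t^2 * Sf p lam t/(4*tau p lam t^3*t)) := by
        field_simp
        ring
      rw [hexpand]
      linarith [part1, part2]
  -- endpoint comparison
  have htsmem : ts ∈ Set.Icc ts 1 := ⟨le_refl ts, hts1⟩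
  have h1mem : (1:ℝ) ∈ Set.Icc ts 1 := ⟨hts1, le_refl 1⟩
  have hWW : W ts ≤ W 1 := hmono htsmem h1mem hts1
  have htauts : tau p lam ts = 1 := by
    show Real.sqrt (Tf p lam ts) = 1
    rw [hTs, Real.sqrt_one]
  obtain ⟨hts0', htauts1, hzmts, hzMts, -⟩ := hfacts ts htsmem
  obtain ⟨h10, htau11, hzm1, hzM1, -⟩ := hfacts 1 h1mem
  have hEhts_lb : m^2/2 * (ψ ts^2/tau p lam ts + tau p lam ts*φ ts^2) ≤ Eh p lam φ ψ ts :=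
    alg_Eh_lb hm0 hzmts htauts1
  have hEh1_lb : m^2/2 * (ψ 1^2/tau p lam 1 + tau p lam 1*φ 1^2) ≤ Eh p lam φ ψ 1 :=
    alg_Eh_lb hm0 hzm1 htau11
  have hEhts0 : 0 ≤ Eh p lam φ ψ ts := le_trans (by positivity) hEhts_lb
  have hEh10 : 0 ≤ Eh p lam φ ψ 1 := le_trans (by positivity) hEh1_lb
  have hgts : -(K*M) - c1/a ≤ g ts := by
    have he1 : ts^a * ts^(-a) = 1 := by
      rw [← Real.rpow_add hts0, add_neg_cancel, Real.rpow_zero]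
    have : g ts = -(K * zf p lam ts) - c1/a := by
      rw [hg_def]
      simp only []
      rw [show c1 / a * ts ^ a * ts ^ (-a) = c1/a * (ts^a * ts^(-a)) by ring, he1, mul_one]
    rw [this]
    have : K * zf p lam ts ≤ K * M := mul_le_mul_of_nonneg_left hzMts hK0.le
    linarith
  have hg1 : g 1 ≤ -(K*m) := by
    have h1a : (1:ℝ)^(-a) = 1 := Real.one_rpow _
    have : g 1 = -(K * zf p lam 1) - c1/a*ts^a := by
      rw [hg_def]; simp only []; rw [h1a, mul_one]
    rw [this]
    have h2 : K * m ≤ K * zf p lam 1 := mul_le_mul_of_nonneg_left hzm1 hK0.le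
    have h3 : 0 ≤ c1/a*ts^a := by positivity
    linarith
  have hEhchain : Eh p lam φ ψ ts ≤ Real.exp (K*(M-m) + c1/a) * Eh p lam φ ψ 1 := by
    have e1 : Eh p lam φ ψ ts * Real.exp (-(K*M) - c1/a) ≤ W ts := by
      rw [hW_def]
      exact mul_le_mul_of_nonneg_left (Real.exp_le_exp.2 hgts) hEhts0
    have e2 : W 1 ≤ Eh p lam φ ψ 1 * Real.exp (-(K*m)) := by
      rw [hW_def]
      exact mul_le_mul_of_nonneg_left (Real.exp_le_exp.2 hg1) hEh10
    have e3 : Eh p lam φ ψ ts * Real.exp (-(K*M) - c1/a) ≤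
        Eh p lam φ ψ 1 * Real.exp (-(K*m)) := le_trans e1 (le_trans hWW e2)
    have e4 : (0:ℝ) < Real.exp (-(K*M) - c1/a) := Real.exp_pos _
    rw [← le_div_iff₀ e4] at e3
    calc Eh p lam φ ψ ts ≤ Eh p lam φ ψ 1 * Real.exp (-(K*m)) / Real.exp (-(K*M) - c1/a) := e3
      _ = Real.exp (K*(M-m) + c1/a) * Eh p lam φ ψ 1 := by
          rw [mul_div_assoc, ← Real.exp_sub]
          ring_nf
  have hfinal1 : ψ ts^2 + φ ts^2 ≤ 2/m^2 * Eh p lam φ ψ ts := by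
    rw [htauts, div_one, one_mul] at hEhts_lb
    rw [div_mul_eq_mul_div, le_div_iff₀ (by positivity : (0:ℝ) < m^2)]
    nlinarith
  have hfinal2 : Eh p lam φ ψ 1 ≤ (M^2+M+1) * (ψ 1^2/tau p lam 1 + tau p lam 1*φ 1^2) :=
    alg_Eh_ub hm0 hzm1 hzM1 htau11
  have hC : 2/m^2 * Real.exp (K*(M-m) + c1/a) * (M^2+M+1) = Chigh a b := by
    rw [hK_def, hc1_def, hM_def, hm_def, Chigh]
  rw [← hC]
  have hXY0 : 0 ≤ ψ 1^2/tau p lam 1 + tau p lam 1*φ 1^2 := by positivity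
  calc ψ ts^2 + φ ts^2 ≤ 2/m^2 * Eh p lam φ ψ ts := hfinal1
    _ ≤ 2/m^2 * (Real.exp (K*(M-m) + c1/a) * Eh p lam φ ψ 1) :=
        mul_le_mul_of_nonneg_left hEhchain (by positivity)
    _ ≤ 2/m^2 * (Real.exp (K*(M-m) + c1/a) *
        ((M^2+M+1) * (ψ 1^2/tau p lam 1 + tau p lam 1*φ 1^2))) := by
        refine mul_le_mul_of_nonneg_left (mul_le_mul_of_nonneg_left hfinal2 (by positivity)) (by positivity)
    _ = 2/m^2 * Real.exp (K*(M-m) + c1/a) * (M^2+M+1) *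
        (ψ 1^2/tau p lam 1 + tau p lam 1*φ 1^2) := by ring
noncomputable def Cbeta (a : ℝ) : ℝ := 1 + 2/(a/2) + 4/(a/2)^2
noncomputable def Clow (a : ℝ) : ℝ := Real.exp (4 * Cbeta a / a)

lemma El_nonneg (ts : ℝ) (φ ψ : ℝ → ℝ) (t : ℝ) :
    0 ≤ ψ t^2 + (φ t - ψ t * Real.log (t/ts))^2 := by positivity

lemma hasDerivAt_El (p : Fin D → ℝ) (lam : Fin D → ℤ) {ts t : ℝ} (hts : 0 < ts) (ht : 0 < t)
    {φ ψ : ℝ → ℝ} (hφ : HasDerivAt φ (ψ t / t) t)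
    (hψ : HasDerivAt ψ (-(tau p lam t ^ 2) * φ t / t) t) :
    HasDerivAt (fun u => ψ u^2 + (φ u - ψ u * Real.log (u/ts))^2)
      (2 * tau p lam t^2 * φ t / t *
        ((φ t - ψ t * Real.log (t/ts)) * Real.log (t/ts) - ψ t)) t := by
  have hL : HasDerivAt (fun u : ℝ => Real.log (u / ts)) (1 / t) t := by
    have h := (Real.hasDerivAt_log (div_ne_zero ht.ne' hts.ne')).comp t
      ((hasDerivAt_id t).div_const ts)
    refine h.congr_deriv ?_
    field_simp
  have hphit : HasDerivAt (fun u => φ u - ψ u * Real.log (u/ts))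
      (tau p lam t^2 * φ t * Real.log (t/ts) / t) t := by
    have h := hφ.sub (hψ.mul hL)
    refine h.congr_deriv ?_
    field_simp
    ring
  have h := (hψ.pow 2).add (hphit.pow 2)
  refine h.congr_deriv ?_
  field_simp
  ring

set_option maxHeartbeats 2000000 in
lemma low_estimate (ha : 0 < a) (haP : ∀ i, a ≤ 2 - 2 * p i)
    {lam : Fin D → ℤ} (hlam : lam ≠ 0) {ts : ℝ} (hts0 : 0 < ts)
    (hTs : Tf p lam ts = 1) {φ ψ : ℝ → ℝ}
    (hsol : IsWaveSol p lam φ ψ (Set.Ioi 0)) :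
    ∀ t ∈ Set.Ioc (0:ℝ) ts,
      ψ t^2 + (φ t - ψ t * Real.log (t/ts))^2 ≤
        Clow a * (ψ ts^2 + (φ ts - ψ ts * Real.log (ts/ts))^2) := by
  have hCb : 0 < Cbeta a := by rw [Cbeta]; positivity
  set cg : ℝ := (4 * Cbeta a / a) * ts^(-(a/2)) with hcg_def
  have hcg0 : 0 < cg := by
    refine mul_pos (by positivity) (Real.rpow_pos_of_pos hts0 _)
  set El : ℝ → ℝ := fun u => ψ u^2 + (φ u - ψ u * Real.log (u/ts))^2 with hEl_def
  set Wl : ℝ → ℝ := fun u => El u * Real.exp (cg * u^(a/2)) with hWl_def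
  set Wld : ℝ → ℝ := fun t =>
    (2 * tau p lam t^2 * φ t / t *
        ((φ t - ψ t * Real.log (t/ts)) * Real.log (t/ts) - ψ t)
      + El t * (cg * ((a/2) * t^(a/2-1)))) * Real.exp (cg * t^(a/2)) with hWld_def
  have hWder : ∀ t ∈ Set.Ioi (0:ℝ), HasDerivAt Wl (Wld t) t := by
    intro t ht'
    have ht : 0 < t := ht'
    have hE := hasDerivAt_El p lam hts0 ht (hsol t ht').1 (hsol t ht').2
    have hw : HasDerivAt (fun u : ℝ => cg * u^(a/2)) (cg * ((a/2) * t^(a/2-1))) t :=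
      (Real.hasDerivAt_rpow_const (x := t) (p := a/2) (Or.inl ht.ne')).const_mul cg
    have h := hE.mul hw.exp
    refine h.congr_deriv ?_
    rw [hWld_def]
    ring
  have hmono : MonotoneOn Wl (Set.Ioc 0 ts) := by
    refine monotoneOn_of_hasDerivWithinAt_nonneg (f' := Wld) (convex_Ioc 0 ts) ?_ ?_ ?_
    · intro t htmem
      exact ((hWder t htmem.1).continuousAt).continuousWithinAt
    · intro t htmem
      rw [interior_Ioc] at htmem
      exact (hWder t htmem.1).hasDerivWithinAt
    · intro t htmem
      rw [interior_Ioc] at htmem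
      have ht : 0 < t := htmem.1
      have htts : t ≤ ts := htmem.2.le
      rw [hWld_def]
      refine mul_nonneg ?_ (Real.exp_nonneg _)
      -- core low inequality
      set x : ℝ := Real.log (ts/t) with hx_def
      have hx0 : 0 ≤ x := Real.log_nonneg ((one_le_div ht).2 htts)
      have hLx : Real.log (t/ts) = -x := by
        rw [hx_def, ← Real.log_inv, inv_div]
      have hu0 : 0 < t/ts := by positivity
      -- scalar bound : tau^2 (1+x)^2 ≤ Cbeta * (t/ts)^(a/2)
      have htau2 : tau p lam t^2 ≤ (t/ts)^a := by
        rw [tau_sq p lam ht]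
        exact Tf_low lam haP ht htts hTs
      have hxe : (1+x)^2 ≤ Cbeta a * (ts/t)^(a/2) := by
        have h1 := alg_exp hx0 (by positivity : (0:ℝ) < a/2)
        have h2 : Real.exp ((a/2) * x) = (ts/t)^(a/2) := by
          rw [Real.rpow_def_of_pos (by positivity : (0:ℝ) < ts/t), hx_def, mul_comm]
        rw [← Cbeta, h2] at h1
        exact h1
      have hscal : tau p lam t^2 * (1+x)^2 ≤ Cbeta a * (t/ts)^(a/2) := by
        have h3 : tau p lam t^2 * (1+x)^2 ≤ (t/ts)^a * (Cbeta a * (ts/t)^(a/2)) := by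
          refine mul_le_mul htau2 hxe (by positivity) (by positivity)
        refine le_trans h3 (le_of_eq ?_)
        have hinv : (ts/t)^(a/2) = (t/ts)^(-(a/2)) := by
          rw [show ts/t = (t/ts)⁻¹ by rw [inv_div], Real.inv_rpow hu0.le,
            ← Real.rpow_neg hu0.le]
        rw [hinv, show (t/ts)^a * (Cbeta a * (t/ts)^(-(a/2)))
            = Cbeta a * ((t/ts)^a * (t/ts)^(-(a/2))) by ring,
          ← Real.rpow_add hu0, show a + -(a/2) = a/2 by ring]
      -- quadratic bound
      have hquad := alg_low (ψ := ψ t) (ph := φ t - ψ t * Real.log (t/ts)) hx0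
      rw [← hLx] at hquad
      -- combine
      have hEl0 : 0 ≤ El t := El_nonneg ts φ ψ t
      have hElval : El t = ψ t^2 + (φ t - ψ t * Real.log (t/ts))^2 := rfl
      have hde : cg * ((a/2) * t^(a/2-1)) = 2 * Cbeta a * (t/ts)^(a/2) / t := by
        rw [hcg_def, Real.rpow_sub_one ht.ne',
          Real.div_rpow ht.le hts0.le, Real.rpow_neg hts0.le]
        field_simp
        ring
      rw [hde]
      have hkey : 2 * tau p lam t^2 / t * ((1+x)^2 * El t) ≤
          2 * Cbeta a * (t/ts)^(a/2) / t * El t := by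
        rw [div_mul_eq_mul_div, div_mul_eq_mul_div, div_le_div_iff₀ ht ht]
        have := mul_le_mul_of_nonneg_right hscal hEl0
        nlinarith [this, ht]
      have hlow : -(2 * tau p lam t^2 / t) * ((1+x)^2 * El t) ≤
          2 * tau p lam t^2 * φ t / t *
            ((φ t - ψ t * Real.log (t/ts)) * Real.log (t/ts) - ψ t) := by
        have hfac : 0 ≤ 2 * tau p lam t^2 / t := by positivity
        have h5 := mul_le_mul_of_nonneg_left hquad hfac
        calc -(2 * tau p lam t^2 / t) * ((1+x)^2 * El t)
            = 2 * tau p lam t^2 / t *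
              (-((1+x)^2 * (ψ t^2 + (φ t - ψ t * Real.log (t/ts))^2))) := by
              rw [hElval]; ring
          _ ≤ 2 * tau p lam t^2 / t *
              (((φ t - ψ t * Real.log (t/ts)) * Real.log (t/ts) - ψ t) *
                ((φ t - ψ t * Real.log (t/ts)) + ψ t * Real.log (t/ts))) := h5
          _ = 2 * tau p lam t^2 * φ t / t *
              ((φ t - ψ t * Real.log (t/ts)) * Real.log (t/ts) - ψ t) := by
              field_simp
              ring
      linarith [hkey, hlow]
  -- conclusion
  intro t htmem
  have ht : 0 < t := htmem.1
  have htsmem : ts ∈ Set.Ioc (0:ℝ) ts := ⟨hts0, le_refl ts⟩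
  have h1 : El t ≤ Wl t := by
    rw [hWl_def]
    have : (1:ℝ) ≤ Real.exp (cg * t^(a/2)) := by
      rw [show (1:ℝ) = Real.exp 0 by rw [Real.exp_zero]]
      exact Real.exp_le_exp.2 (by positivity)
    nlinarith [El_nonneg ts φ ψ t]
  have h2 : Wl t ≤ Wl ts := hmono htmem htsmem htmem.2
  have h3 : Wl ts = El ts * Real.exp (4 * Cbeta a / a) := by
    have hcg2 : cg * ts^(a/2) = 4 * Cbeta a / a := by
      rw [hcg_def, mul_assoc, ← Real.rpow_add hts0, show -(a/2) + a/2 = 0 by ring,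
        Real.rpow_zero, mul_one]
    show El ts * Real.exp (cg * ts^(a/2)) = _
    rw [hcg2]
  calc El t ≤ Wl ts := le_trans h1 h2
    _ = Clow a * El ts := by rw [h3, Clow]; ring
lemma rpow_tendsto_zero {c : ℝ} (hc : 0 < c) :
    Tendsto (fun t : ℝ => t ^ c) (𝓝[>] (0:ℝ)) (𝓝 0) := by
  have h := (Real.continuousAt_rpow_const 0 c (Or.inr hc.le)).tendsto
  rw [Real.zero_rpow hc.ne'] at h
  exact h.mono_left nhdsWithin_le_nhds

lemma tendsto_of_deriv_bound {f fd : ℝ → ℝ} {ts c Kc B : ℝ} (hts0 : 0 < ts) (hc : 0 < c)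
    (hK : 0 ≤ Kc) (hder : ∀ t ∈ Set.Ioi (0:ℝ), HasDerivAt f (fd t) t)
    (hdb : ∀ t ∈ Set.Ioo (0:ℝ) ts, -(Kc * t^(c-1)) ≤ fd t)
    (hbd : ∀ t ∈ Set.Ioc (0:ℝ) ts, -B ≤ f t) :
    ∃ l, Tendsto f (𝓝[>] (0:ℝ)) (𝓝 l) := by
  set h : ℝ → ℝ := fun t => f t + (Kc/c) * t^c with hh_def
  have hhd : ∀ t ∈ Set.Ioi (0:ℝ), HasDerivAt h (fd t + (Kc/c) * (c * t^(c-1))) t := by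
    intro t ht
    exact (hder t ht).add ((Real.hasDerivAt_rpow_const (x := t) (p := c)
      (Or.inl (ne_of_gt ht))).const_mul (Kc/c))
  have hmono : MonotoneOn h (Set.Ioc 0 ts) := by
    refine monotoneOn_of_hasDerivWithinAt_nonneg
      (f' := fun t => fd t + (Kc/c) * (c * t^(c-1))) (convex_Ioc 0 ts) ?_ ?_ ?_
    · intro t htmem
      exact ((hhd t htmem.1).continuousAt).continuousWithinAt
    · intro t htmem
      rw [interior_Ioc] at htmem
      exact (hhd t htmem.1).hasDerivWithinAt
    · intro t htmem
      rw [interior_Ioc] at htmem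
      have := hdb t htmem
      have he : (Kc/c) * (c * t^(c-1)) = Kc * t^(c-1) := by
        field_simp
      show 0 ≤ fd t + (Kc/c) * (c * t^(c-1))
      rw [he]
      linarith
  set g : ℝ → ℝ := fun t => h (min t ts) with hg_def
  have hgmono : MonotoneOn g (Set.Ioi (0:ℝ)) := by
    intro s hs t ht hst
    exact hmono ⟨lt_min hs hts0, min_le_right _ _⟩ ⟨lt_min ht hts0, min_le_right _ _⟩
      (min_le_min hst (le_refl ts))
  have hbdd : BddBelow (g '' Set.Ioi (0:ℝ)) := by
    refine ⟨-B, fun y hy => ?_⟩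
    obtain ⟨t, ht, rfl⟩ := hy
    have hmem : min t ts ∈ Set.Ioc (0:ℝ) ts := ⟨lt_min ht hts0, min_le_right _ _⟩
    have h1 := hbd _ hmem
    have h2 : 0 ≤ (Kc/c) * (min t ts)^c :=
      mul_nonneg (by positivity) (Real.rpow_nonneg hmem.1.le _)
    show -B ≤ f (min t ts) + (Kc/c) * (min t ts)^c
    linarith
  have htendg := MonotoneOn.tendsto_nhdsGT hgmono hbdd
  have hcor : Tendsto (fun t : ℝ => (Kc/c) * t^c) (𝓝[>] (0:ℝ)) (𝓝 0) := by
    have := (rpow_tendsto_zero hc).const_mul (Kc/c)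
    simpa using this
  refine ⟨sInf (g '' Set.Ioi 0), ?_⟩
  have hEq : (fun t => g t - (Kc/c) * t^c) =ᶠ[𝓝[>] (0:ℝ)] f := by
    filter_upwards [Ioc_mem_nhdsGT hts0] with t htmem
    have : min t ts = t := min_eq_left htmem.2
    show g t - (Kc/c) * t^c = f t
    rw [hg_def]
    simp only [this]
    show f t + (Kc/c) * t^c - (Kc/c) * t^c = f t
    ring
  have := (htendg.sub hcor).congr' hEq
  simpa using this
lemma rpow_sq_helper {u : ℝ} (hu : 0 < u) (y : ℝ) : (u^y)^2 = u^(2*y) := by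
  rw [sq, ← Real.rpow_add hu, two_mul]

lemma neg_le_of_sq_le {d W : ℝ} (hW : 0 ≤ W) (h : d^2 ≤ W^2) : -W ≤ d := by nlinarith

lemma hasDerivAt_phit (p : Fin D → ℝ) (lam : Fin D → ℤ) {ts t : ℝ} (hts : 0 < ts) (ht : 0 < t)
    {φ ψ : ℝ → ℝ} (hφ : HasDerivAt φ (ψ t / t) t)
    (hψ : HasDerivAt ψ (-(tau p lam t ^ 2) * φ t / t) t) :
    HasDerivAt (fun u => φ u - ψ u * Real.log (u/ts))
      (tau p lam t^2 * φ t * Real.log (t/ts) / t) t := by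
  have hL : HasDerivAt (fun u : ℝ => Real.log (u / ts)) (1 / t) t := by
    have h := (Real.hasDerivAt_log (div_ne_zero ht.ne' hts.ne')).comp t
      ((hasDerivAt_id t).div_const ts)
    refine h.congr_deriv ?_
    field_simp
  have h := hφ.sub (hψ.mul hL)
  refine h.congr_deriv ?_
  field_simp
  ring

set_option maxHeartbeats 2000000 in
lemma mode_estimate (ha : 0 < a) (hb : a ≤ b)
    (hab : ∀ i, a ≤ 2 - 2 * p i ∧ 2 - 2 * p i ≤ b)
    {lam : Fin D → ℤ} (hlam : lam ≠ 0) {ts : ℝ} (hts0 : 0 < ts) (hts1 : ts ≤ 1)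
    (htaueq : tau p lam ts = 1) {φ ψ : ℝ → ℝ}
    (hsol : IsWaveSol p lam φ ψ (Set.Ioi 0)) :
    ∃ pI fI : ℝ,
      Tendsto ψ (𝓝[>] (0:ℝ)) (𝓝 pI) ∧
      Tendsto (fun t => φ t - ψ t * Real.log (t / ts)) (𝓝[>] (0:ℝ)) (𝓝 fI) ∧
      pI^2 + fI^2 ≤ Clow a * Chigh a b *
        (ψ 1^2 / tau p lam 1 + tau p lam 1 * φ 1^2) := by
  have hTs : Tf p lam ts = 1 := by
    rw [← tau_sq p lam hts0, htaueq]; norm_num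
  have hCb : 0 < Cbeta a := by rw [Cbeta]; positivity
  have hClow0 : 0 < Clow a := Real.exp_pos _
  have hlogts : Real.log (ts/ts) = 0 := by rw [div_self hts0.ne', Real.log_one]
  set EB : ℝ := Clow a * (ψ ts^2 + φ ts^2) with hEB_def
  have hEB0 : 0 ≤ EB := mul_nonneg hClow0.le (by positivity)
  have hEl_le : ∀ t ∈ Set.Ioc (0:ℝ) ts,
      ψ t^2 + (φ t - ψ t * Real.log (t/ts))^2 ≤ EB := by
    intro t htm
    have h := low_estimate ha (fun i => (hab i).1) hlam hts0 hTs hsol t htm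
    rwa [hlogts, mul_zero, sub_zero] at h
  -- pointwise facts in low region
  have hfacts : ∀ t ∈ Set.Ioo (0:ℝ) ts,
      (tau p lam t^2)^2 * φ t^2 ≤ 2*Cbeta a*EB * ((t/ts)^(3*a/4))^2 ∧
      (tau p lam t^2 * φ t * Real.log (t/ts))^2 ≤
        2*(Cbeta a)^2*EB * ((t/ts)^(a/2))^2 := by
    intro t htm
    have ht : 0 < t := htm.1
    have htts : t ≤ ts := htm.2.le
    have hu0 : 0 < t/ts := by positivity
    set u : ℝ := t/ts with hu_def
    set x : ℝ := Real.log (ts/t) with hx_def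
    have hx0 : 0 ≤ x := Real.log_nonneg ((one_le_div ht).2 htts)
    have hLx : Real.log (t/ts) = -x := by rw [hx_def, ← Real.log_inv, inv_div]
    have htau2 : tau p lam t^2 ≤ u^a := by
      rw [tau_sq p lam ht]; exact Tf_low lam (fun i => (hab i).1) ht htts hTs
    have htau2' : 0 ≤ tau p lam t^2 := sq_nonneg _
    have hEl := hEl_le t ⟨ht, htts⟩
    have hpsi2 : ψ t^2 ≤ EB := by nlinarith [sq_nonneg (φ t - ψ t * Real.log (t/ts))]
    have hpht2 : (φ t - ψ t * Real.log (t/ts))^2 ≤ EB := by nlinarith [sq_nonneg (ψ t)]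
    have hphi2 : φ t^2 ≤ 2*EB*(1+x)^2 := by
      rw [show φ t = (φ t - ψ t * Real.log (t/ts)) - ψ t * x from by rw [hLx]; ring]
      nlinarith [hpht2, hpsi2, sq_nonneg ((φ t - ψ t * Real.log (t/ts)) + ψ t * x),
        mul_nonneg (mul_nonneg hx0 hx0) (sub_nonneg.2 hpsi2), hx0,
        mul_nonneg hx0 hEB0]
    have h1x : (1+x)^2 ≤ Cbeta a * u^(-(a/2)) := by
      have h1 := alg_exp hx0 (by positivity : (0:ℝ) < a/2)
      have h2 : Real.exp ((a/2) * x) = u^(-(a/2)) := by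
        rw [show u^(-(a/2)) = (ts/t)^(a/2) by
          rw [show ts/t = u⁻¹ by rw [hu_def, inv_div], Real.inv_rpow hu0.le,
            ← Real.rpow_neg hu0.le]]
        rw [Real.rpow_def_of_pos (by positivity : (0:ℝ) < ts/t), hx_def, mul_comm]
      rw [← Cbeta, h2] at h1
      exact h1
    have hx1 : 0 ≤ (1+x)^2 := sq_nonneg _
    constructor
    · have hc1 : (tau p lam t^2)^2 * φ t^2 ≤ (u^a)^2 * (2*EB*(Cbeta a * u^(-(a/2)))) := by
        have hstep : φ t^2 ≤ 2*EB*(Cbeta a * u^(-(a/2))) := by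
          refine le_trans hphi2 ?_
          have := mul_le_mul_of_nonneg_left h1x (by positivity : (0:ℝ) ≤ 2*EB)
          linarith
        refine mul_le_mul (pow_le_pow_left₀ htau2' htau2 2) hstep (sq_nonneg _) (by positivity)
      refine le_trans hc1 (le_of_eq ?_)
      rw [rpow_sq_helper hu0 a, rpow_sq_helper hu0 (3*a/4)]
      rw [show u^(2*a) * (2*EB*(Cbeta a * u^(-(a/2))))
        = 2*Cbeta a*EB*(u^(2*a)*u^(-(a/2))) by ring, ← Real.rpow_add hu0,
        show 2*a + -(a/2) = 2*(3*a/4) by ring]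
    · have hL2 : (Real.log (t/ts))^2 = x^2 := by rw [hLx]; ring
      have hc2 : (tau p lam t^2 * φ t * Real.log (t/ts))^2
          = (tau p lam t^2)^2 * φ t^2 * x^2 := by rw [← hL2]; ring
      rw [hc2]
      have hx2 : x^2 ≤ (1+x)^2 := by nlinarith
      have hbig : (tau p lam t^2)^2 * φ t^2 * x^2
          ≤ (u^a)^2 * (2*EB*(1+x)^2) * (1+x)^2 := by
        refine mul_le_mul ?_ hx2 (sq_nonneg _) (by positivity)
        refine mul_le_mul (pow_le_pow_left₀ htau2' htau2 2) hphi2 (sq_nonneg _) (by positivity)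
      refine le_trans hbig ?_
      have h4 : (1+x)^2 * (1+x)^2 ≤ (Cbeta a * u^(-(a/2))) * (Cbeta a * u^(-(a/2))) :=
        mul_le_mul h1x h1x hx1 (by positivity)
      have h5 : (u^a)^2 * (2*EB*(1+x)^2) * (1+x)^2
          = (u^a)^2 * (2*EB) * ((1+x)^2 * (1+x)^2) := by ring
      rw [h5]
      have h6 : (u^a)^2 * (2*EB) * ((1+x)^2 * (1+x)^2)
          ≤ (u^a)^2 * (2*EB) * ((Cbeta a * u^(-(a/2))) * (Cbeta a * u^(-(a/2)))) := by
        refine mul_le_mul_of_nonneg_left h4 (by positivity)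
      refine le_trans h6 (le_of_eq ?_)
      rw [rpow_sq_helper hu0 a, rpow_sq_helper hu0 (a/2)]
      rw [show u^(2*a) * (2*EB) * ((Cbeta a * u^(-(a/2))) * (Cbeta a * u^(-(a/2))))
        = 2*(Cbeta a)^2*EB*(u^(2*a)*u^(-(a/2))*u^(-(a/2))) by ring,
        ← Real.rpow_add hu0, ← Real.rpow_add hu0,
        show 2*a + -(a/2) + -(a/2) = 2*(a/2) by ring]
  -- bounds for monotone-limit lemma
  have hBnd : ∀ t ∈ Set.Ioc (0:ℝ) ts, -(Real.sqrt EB) ≤ ψ t ∧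
      -(Real.sqrt EB) ≤ φ t - ψ t * Real.log (t/ts) := by
    intro t htm
    have hEl := hEl_le t htm
    have h1 : ψ t^2 ≤ (Real.sqrt EB)^2 := by
      rw [Real.sq_sqrt hEB0]; nlinarith [sq_nonneg (φ t - ψ t * Real.log (t/ts))]
    have h2 : (φ t - ψ t * Real.log (t/ts))^2 ≤ (Real.sqrt EB)^2 := by
      rw [Real.sq_sqrt hEB0]; nlinarith [sq_nonneg (ψ t)]
    exact ⟨neg_le_of_sq_le (Real.sqrt_nonneg _) h1, neg_le_of_sq_le (Real.sqrt_nonneg _) h2⟩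
  -- limit of ψ
  set K1 : ℝ := Real.sqrt (2*Cbeta a*EB) * ts^(-(3*a/4)) with hK1_def
  have hK10 : 0 ≤ K1 := mul_nonneg (Real.sqrt_nonneg _) (Real.rpow_nonneg hts0.le _)
  have hpsilim : ∃ l, Tendsto ψ (𝓝[>] (0:ℝ)) (𝓝 l) := by
    refine tendsto_of_deriv_bound (fd := fun t => -(tau p lam t^2) * φ t / t)
      (c := 3*a/4) hts0 (by positivity) hK10
      (fun t ht => (hsol t ht).2) ?_ (fun t htm => (hBnd t htm).1)
    intro t htm
    have ht : 0 < t := htm.1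
    have hu0 : 0 < t/ts := by positivity
    have hW : K1 * t^(3*a/4-1) = Real.sqrt (2*Cbeta a*EB) * (t/ts)^(3*a/4) / t := by
      rw [hK1_def, Real.rpow_sub_one ht.ne', Real.div_rpow ht.le hts0.le,
        Real.rpow_neg hts0.le]
      field_simp
    refine neg_le_of_sq_le (by rw [hW]; positivity) ?_
    rw [hW]
    have hfact := (hfacts t htm).1
    have e1 : (Real.sqrt (2*Cbeta a*EB)*((t/ts)^(3*a/4))/t)^2
        = 2*Cbeta a*EB*((t/ts)^(3*a/4))^2/t^2 := by
      rw [show (Real.sqrt (2*Cbeta a*EB)*((t/ts)^(3*a/4))/t)^2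
        = (Real.sqrt (2*Cbeta a*EB))^2*((t/ts)^(3*a/4))^2/t^2 from by ring,
        Real.sq_sqrt (by positivity : (0:ℝ) ≤ 2*Cbeta a*EB)]
    rw [e1, show ((-(tau p lam t^2))*φ t/t)^2 = ((tau p lam t^2)^2*φ t^2)/t^2 from by ring]
    gcongr
  -- limit of φ̃
  set K2 : ℝ := Real.sqrt (2*(Cbeta a)^2*EB) * ts^(-(a/2)) with hK2_def
  have hK20 : 0 ≤ K2 := mul_nonneg (Real.sqrt_nonneg _) (Real.rpow_nonneg hts0.le _)
  have hphitlim : ∃ l, Tendsto (fun t => φ t - ψ t * Real.log (t/ts))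
      (𝓝[>] (0:ℝ)) (𝓝 l) := by
    refine tendsto_of_deriv_bound
      (fd := fun t => tau p lam t^2 * φ t * Real.log (t/ts) / t)
      (c := a/2) hts0 (by positivity) hK20
      (fun t ht => hasDerivAt_phit p lam hts0 ht (hsol t ht).1 (hsol t ht).2) ?_
      (fun t htm => (hBnd t htm).2)
    intro t htm
    have ht : 0 < t := htm.1
    have hW : K2 * t^(a/2-1) = Real.sqrt (2*(Cbeta a)^2*EB) * (t/ts)^(a/2) / t := by
      rw [hK2_def, Real.rpow_sub_one ht.ne', Real.div_rpow ht.le hts0.le,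
        Real.rpow_neg hts0.le]
      field_simp
    refine neg_le_of_sq_le (by rw [hW]; positivity) ?_
    rw [hW]
    have hfact := (hfacts t htm).2
    have e1 : (Real.sqrt (2*(Cbeta a)^2*EB)*((t/ts)^(a/2))/t)^2
        = 2*(Cbeta a)^2*EB*((t/ts)^(a/2))^2/t^2 := by
      rw [show (Real.sqrt (2*(Cbeta a)^2*EB)*((t/ts)^(a/2))/t)^2
        = (Real.sqrt (2*(Cbeta a)^2*EB))^2*((t/ts)^(a/2))^2/t^2 from by ring,
        Real.sq_sqrt (by positivity : (0:ℝ) ≤ 2*(Cbeta a)^2*EB)]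
    rw [e1, show (tau p lam t^2*φ t*Real.log (t/ts)/t)^2
      = ((tau p lam t^2*φ t*Real.log (t/ts))^2)/t^2 from by ring]
    gcongr
  obtain ⟨pI, hpI⟩ := hpsilim
  obtain ⟨fI, hfI⟩ := hphitlim
  refine ⟨pI, fI, hpI, hfI, ?_⟩
  -- limit bound
  have hlim2 : Tendsto (fun t => ψ t^2 + (φ t - ψ t * Real.log (t/ts))^2)
      (𝓝[>] (0:ℝ)) (𝓝 (pI^2 + fI^2)) := (hpI.pow 2).add (hfI.pow 2)
  have hle : pI^2 + fI^2 ≤ EB := by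
    refine le_of_tendsto hlim2 ?_
    filter_upwards [Ioc_mem_nhdsGT hts0] with t htm
    exact hEl_le t htm
  have hhigh := high_estimate ha hb hab hlam hts0 hts1 hTs hsol
  calc pI^2 + fI^2 ≤ EB := hle
    _ = Clow a * (ψ ts^2 + φ ts^2) := hEB_def
    _ ≤ Clow a * (Chigh a b * (ψ 1^2 / tau p lam 1 + tau p lam 1 * φ 1^2)) :=
        mul_le_mul_of_nonneg_left hhigh hClow0.le
    _ = Clow a * Chigh a b * (ψ 1^2 / tau p lam 1 + tau p lam 1 * φ 1^2) := by ring
lemma weight_step {Cm N j w psi1 phi1 P : ℝ} (hCm : 0 ≤ Cm) (hN1 : 1 ≤ N) (hNj : N ≤ j)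
    (hj2 : j ≤ Real.sqrt 2 * N) (hw : 0 ≤ w) (hP : 0 ≤ P)
    (hmode : P ≤ Cm * (psi1^2/N + N*phi1^2)) :
    w * j * P ≤ (Real.sqrt 2 * Cm) * ((w * j^2) * phi1^2 + w * psi1^2) := by
  have hN0 : 0 < N := lt_of_lt_of_le one_pos hN1
  have hj0 : 0 < j := lt_of_lt_of_le hN0 hNj
  have hs2 : 1 ≤ Real.sqrt 2 := by
    rw [show (1:ℝ) = Real.sqrt 1 by rw [Real.sqrt_one]]
    exact Real.sqrt_le_sqrt (by norm_num)
  have step1 : j*(psi1^2/N) ≤ Real.sqrt 2 * psi1^2 := by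
    rw [show j*(psi1^2/N) = j*psi1^2/N by ring, div_le_iff₀ hN0]
    nlinarith [sq_nonneg psi1]
  have step2 : j*(N*phi1^2) ≤ j^2*phi1^2 := by
    nlinarith [mul_le_mul_of_nonneg_right hNj (mul_nonneg hj0.le (sq_nonneg phi1))]
  calc w * j * P ≤ w * j * (Cm * (psi1^2/N + N*phi1^2)) := by
        refine mul_le_mul_of_nonneg_left hmode (by positivity)
    _ = w * (Cm * (j*(psi1^2/N) + j*(N*phi1^2))) := by ring
    _ ≤ w * (Cm * (Real.sqrt 2 * psi1^2 + j^2*phi1^2)) := by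
        refine mul_le_mul_of_nonneg_left
          (mul_le_mul_of_nonneg_left (add_le_add step1 step2) hCm) hw
    _ ≤ (Real.sqrt 2 * Cm) * ((w * j^2) * phi1^2 + w * psi1^2) := by
        nlinarith [mul_nonneg (mul_nonneg hw (mul_nonneg hCm (sq_nonneg j))) (sq_nonneg phi1)]

lemma jap_facts {lam : Fin D → ℤ} (hlam : lam ≠ 0) (p : Fin D → ℝ) :
    1 ≤ tau p lam 1 ∧ tau p lam 1 ≤ jap lam ∧ jap lam ≤ Real.sqrt 2 * tau p lam 1 := by
  set Λ : ℝ := ∑ i, ((lam i:ℝ))^2 with hΛ_def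
  have hΛ1 : 1 ≤ Λ := by
    obtain ⟨i, hi⟩ := Function.ne_iff.1 hlam
    have h1 : (1:ℤ) ≤ (lam i)^2 := by
      have := Int.one_le_abs (by simpa using hi)
      nlinarith [sq_abs (lam i)]
    have h2 : (1:ℝ) ≤ ((lam i:ℝ))^2 := by exact_mod_cast h1
    calc (1:ℝ) ≤ ((lam i:ℝ))^2 := h2
      _ ≤ Λ := Finset.single_le_sum (fun j _ => sq_nonneg ((lam j:ℝ))) (Finset.mem_univ i)
  have hTf1 : Tf p lam 1 = Λ := by
    rw [Tf, hΛ_def]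
    congr 1
    ext i
    rw [Real.one_rpow, one_mul]
  have hN0 : 0 ≤ tau p lam 1 := Real.sqrt_nonneg _
  have hNsq : tau p lam 1 ^2 = Λ := by rw [tau_sq p lam one_pos, hTf1]
  have hj0 : 0 ≤ jap lam := Real.sqrt_nonneg _
  have hjsq : jap lam^2 = 1 + Λ := Real.sq_sqrt (by linarith)
  have hN1 : 1 ≤ tau p lam 1 := by nlinarith
  refine ⟨hN1, by nlinarith, ?_⟩
  have hs : Real.sqrt 2 ^ 2 = 2 := Real.sq_sqrt (by norm_num)
  have h0 : 0 ≤ Real.sqrt 2 * tau p lam 1 := by positivity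
  nlinarith [sq_nonneg (jap lam - Real.sqrt 2 * tau p lam 1)]
end WS

open WS

/-- Forward scattering bound with half-derivative gain: if the Cauchy data at t = 1 lies in
H^{s+1} × H^s, then the asymptotic data (ψ_∞, φ̃_∞) lies in H^{s+1/2} × H^{s+1/2} (modified),
with a bound uniform in s. -/
theorem wave_forward_scattering_bound (D : ℕ) (hD : 2 ≤ D) (p : Fin D → ℝ)
    (hp : ∀ i, p i < 1) :
    ∃ C : ℝ, 0 < C ∧
      ∀ (s : ℝ) (tstar : (Fin D → ℤ) → ℝ),
      (∀ lam : Fin D → ℤ, lam ≠ 0 →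
        0 < tstar lam ∧ tstar lam ≤ 1 ∧ tau p lam (tstar lam) = 1) →
      ∀ (φ ψ : (Fin D → ℤ) → ℝ → ℝ),
      (∀ lam : Fin D → ℤ, lam ≠ 0 → IsWaveSol p lam (φ lam) (ψ lam) (Set.Ioi 0)) →
      Summable (fun l : {l : Fin D → ℤ // l ≠ 0} =>
        jap l.1 ^ (2 * s + 2) * (φ l.1 1) ^ 2 + jap l.1 ^ (2 * s) * (ψ l.1 1) ^ 2) →
      ∃ psiInf phiInf : (Fin D → ℤ) → ℝ,
        (∀ lam : Fin D → ℤ, lam ≠ 0 →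
          Tendsto (ψ lam) (𝓝[>] (0:ℝ)) (𝓝 (psiInf lam)) ∧
          Tendsto (fun t => φ lam t - ψ lam t * Real.log (t / tstar lam))
            (𝓝[>] (0:ℝ)) (𝓝 (phiInf lam))) ∧
        Summable (fun l : {l : Fin D → ℤ // l ≠ 0} =>
          jap l.1 ^ (2 * s + 1) * ((psiInf l.1) ^ 2 + (phiInf l.1) ^ 2)) ∧
        (∑' l : {l : Fin D → ℤ // l ≠ 0},
            jap l.1 ^ (2 * s + 1) * ((psiInf l.1) ^ 2 + (phiInf l.1) ^ 2)) ≤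
          C * ∑' l : {l : Fin D → ℤ // l ≠ 0},
            (jap l.1 ^ (2 * s + 2) * (φ l.1 1) ^ 2 + jap l.1 ^ (2 * s) * (ψ l.1 1) ^ 2) := by
  have hne : (Finset.univ : Finset (Fin D)).Nonempty := by
    refine ⟨⟨0, ?_⟩, Finset.mem_univ _⟩
    omega
  set a : ℝ := Finset.univ.inf' hne (fun i => 2 - 2 * p i) with ha_def
  set b : ℝ := Finset.univ.sup' hne (fun i => 2 - 2 * p i) with hb_def
  have ha : 0 < a := by
    rw [ha_def, Finset.lt_inf'_iff]
    intro i _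
    have := hp i
    linarith
  have hab : ∀ i, a ≤ 2 - 2 * p i ∧ 2 - 2 * p i ≤ b := by
    intro i
    constructor
    · rw [ha_def]
      exact Finset.inf'_le _ (Finset.mem_univ i)
    · rw [hb_def]
      exact Finset.le_sup' (fun i => 2 - 2 * p i) (Finset.mem_univ i)
  have hb : a ≤ b := le_trans (hab ⟨0, by omega⟩).1 (hab ⟨0, by omega⟩).2
  have hb0 : 0 < b := ha.trans_le hb
  set Cm : ℝ := Clow a * Chigh a b with hCm_def
  have hChigh0 : 0 < Chigh a b := by
    rw [Chigh]
    have h1 : 0 < (2/b)^2 := pow_pos (div_pos two_pos hb0) 2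
    have h3 : 0 < (2/a) := div_pos two_pos ha
    refine mul_pos (mul_pos (div_pos two_pos h1) (Real.exp_pos _)) (by nlinarith)
  have hCm0 : 0 < Cm := mul_pos (Real.exp_pos _) hChigh0
  refine ⟨Real.sqrt 2 * Cm, by positivity, ?_⟩
  intro s tstar htstar φ ψ hsol hsum
  have hmode : ∀ lam : Fin D → ℤ, ∃ pI fI : ℝ, lam ≠ 0 →
      (Filter.Tendsto (ψ lam) (𝓝[>] (0:ℝ)) (𝓝 pI) ∧
       Filter.Tendsto (fun t => φ lam t - ψ lam t * Real.log (t / tstar lam))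
         (𝓝[>] (0:ℝ)) (𝓝 fI) ∧
       pI^2 + fI^2 ≤ Cm * ((ψ lam 1)^2 / tau p lam 1 + tau p lam 1 * (φ lam 1)^2)) := by
    intro lam
    by_cases h : lam = 0
    · exact ⟨0, 0, fun h' => absurd h h'⟩
    · obtain ⟨h1, h2, h3⟩ := htstar lam h
      obtain ⟨pI, fI, ht1, ht2, ht3⟩ := mode_estimate ha hb hab h h1 h2 h3 (hsol lam h)
      exact ⟨pI, fI, fun _ => ⟨ht1, ht2, ht3⟩⟩
  choose psiInf phiInf hPF using hmode
  have hterm : ∀ l : {l : Fin D → ℤ // l ≠ 0},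
      jap l.1 ^ (2*s+1) * ((psiInf l.1)^2 + (phiInf l.1)^2) ≤
      (Real.sqrt 2 * Cm) * (jap l.1 ^ (2*s+2) * (φ l.1 1)^2
        + jap l.1 ^ (2*s) * (ψ l.1 1)^2) := by
    rintro ⟨lam, hl⟩
    obtain ⟨hN1, hNj, hj2⟩ := jap_facts hl p
    have hjap0 : 0 < jap lam := lt_of_lt_of_le one_pos (le_trans hN1 hNj)
    have hsplit1 : jap lam^(2*s+1) = jap lam^(2*s) * jap lam := by
      rw [Real.rpow_add hjap0, Real.rpow_one]
    have hsplit2 : jap lam^(2*s+2) = jap lam^(2*s) * jap lam^2 := by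
      rw [Real.rpow_add hjap0]
      congr 1
      rw [← Real.rpow_natCast (jap lam) 2]
      norm_num
    simp only []
    rw [hsplit1, hsplit2]
    have hP0 : 0 ≤ (psiInf lam)^2 + (phiInf lam)^2 := by positivity
    have hw0 : 0 ≤ jap lam^(2*s) := Real.rpow_nonneg (Real.sqrt_nonneg _) _
    have := weight_step (w := jap lam^(2*s)) hCm0.le hN1 hNj hj2 hw0 hP0
      ((hPF lam hl).2.2)
    calc jap lam^(2*s) * jap lam * ((psiInf lam)^2 + (phiInf lam)^2)
        ≤ (Real.sqrt 2 * Cm) * ((jap lam^(2*s) * jap lam^2) * (φ lam 1)^2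
          + jap lam^(2*s) * (ψ lam 1)^2) := this
      _ = (Real.sqrt 2 * Cm) * (jap lam^(2*s) * jap lam^2 * (φ lam 1)^2
          + jap lam^(2*s) * (ψ lam 1)^2) := by ring
  have hnonneg : ∀ l : {l : Fin D → ℤ // l ≠ 0},
      0 ≤ jap l.1 ^ (2*s+1) * ((psiInf l.1)^2 + (phiInf l.1)^2) := by
    intro l
    have := Real.rpow_nonneg (Real.sqrt_nonneg (1 + ∑ i, ((l.1 i:ℝ))^2)) (2*s+1)
    positivity
  have hsum2 : Summable (fun l : {l : Fin D → ℤ // l ≠ 0} =>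
      (Real.sqrt 2 * Cm) * (jap l.1 ^ (2*s+2) * (φ l.1 1)^2
        + jap l.1 ^ (2*s) * (ψ l.1 1)^2)) := hsum.mul_left _
  have hsum1 : Summable (fun l : {l : Fin D → ℤ // l ≠ 0} =>
      jap l.1 ^ (2*s+1) * ((psiInf l.1)^2 + (phiInf l.1)^2)) :=
    Summable.of_nonneg_of_le hnonneg hterm hsum2
  refine ⟨psiInf, phiInf, fun lam h => ⟨(hPF lam h).1, (hPF lam h).2.1⟩, hsum1, ?_⟩
  calc (∑' l : {l : Fin D → ℤ // l ≠ 0},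
        jap l.1 ^ (2*s+1) * ((psiInf l.1)^2 + (phiInf l.1)^2))
      ≤ ∑' l : {l : Fin D → ℤ // l ≠ 0},
        (Real.sqrt 2 * Cm) * (jap l.1 ^ (2*s+2) * (φ l.1 1)^2
          + jap l.1 ^ (2*s) * (ψ l.1 1)^2) := Summable.tsum_le_tsum hterm hsum1 hsum2
    _ = (Real.sqrt 2 * Cm) * ∑' l : {l : Fin D → ℤ // l ≠ 0},
        (jap l.1 ^ (2*s+2) * (φ l.1 1)^2 + jap l.1 ^ (2*s) * (ψ l.1 1)^2) :=
        tsum_mul_left
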